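/- Let f : ℝ → ℝ be twice differentiable and suppose that for every x ∈ ℝ with f'(x) = 0 one has f''(x) > 0. Then f has at most one critical point; moreover, if x0 is a critical point of f, then f attains its strict global minimum at x0, i.e. f(x) > f(x0) for all x ≠ x0. -/

import Mathlib

open Set Filter Topology

lemma ev_key (g : ℝ → ℝ) (hg : Differentiable ℝ g) {z : ℝ}
    (hz : g z = 0) (hz' : 0 < deriv g z) :
    (∀ᶠ x in 𝓝[>] z, 0 < g x) ∧ (∀ᶠ x in 𝓝[<] z, g x < 0) := by
  have hs : Tendsto (slope g z) (𝓝[≠] z) (𝓝 (deriv g z)) :=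
    hasDerivAt_iff_tendsto_slope.mp (hg z).hasDerivAt
  have hev : ∀ᶠ x in 𝓝[≠] z, 0 < slope g z x := hs.eventually (eventually_gt_nhds hz')
  constructor
  · filter_upwards [nhdsWithin_mono z (fun x hx => ne_of_gt hx) hev,
      self_mem_nhdsWithin] with x hx (hx2 : z < x)
    have hsl : slope g z x = g x / (x - z) := by simp [slope_def_field, hz]
    rw [hsl, div_pos_iff] at hx
    rcases hx with ⟨h1, _⟩ | ⟨_, h2⟩
    · exact h1
    · linarith
  · filter_upwards [nhdsWithin_mono z (fun x hx => ne_of_lt hx) hev,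
      self_mem_nhdsWithin] with x hx (hx2 : x < z)
    have hsl : slope g z x = g x / (x - z) := by simp [slope_def_field, hz]
    rw [hsl, div_pos_iff] at hx
    rcases hx with ⟨_, h2⟩ | ⟨h1, _⟩
    · linarith
    · exact h1

lemma key (f : ℝ → ℝ)
    (hf' : Differentiable ℝ (deriv f))
    (hcrit : ∀ x : ℝ, deriv f x = 0 → 0 < deriv (deriv f) x)
    {x0 : ℝ} (h0 : deriv f x0 = 0) : ∀ x, x0 < x → 0 < deriv f x := by
  set g := deriv f with hg
  intro y hy
  by_contra h
  push_neg at h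
  have hgc : Continuous g := hf'.continuous
  obtain ⟨hr, _⟩ := ev_key g hf' h0 (hcrit x0 h0)
  rw [eventually_iff, mem_nhdsGT_iff_exists_Ioo_subset] at hr
  obtain ⟨u, hu, hsub⟩ := hr
  have hx0u : x0 < u := hu
  set a := (x0 + min u y) / 2 with ha
  have hmin : x0 < min u y := lt_min hx0u hy
  have hx0a : x0 < a := by rw [ha]; linarith
  have hau : a < u := by have := min_le_left u y; rw [ha]; linarith
  have hay : a < y := by have := min_le_right u y; rw [ha]; linarith
  have hga : 0 < g a := hsub ⟨hx0a, hau⟩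
  -- zero of g in [a, y]
  obtain ⟨c, hc, hc0⟩ : ∃ c ∈ Icc a y, g c = 0 :=
    intermediate_value_Icc' hay.le hgc.continuousOn ⟨h, hga.le⟩
  set S : Set ℝ := Icc a y ∩ g ⁻¹' {0} with hS
  have hSne : S.Nonempty := ⟨c, hc, hc0⟩
  have hScl : IsClosed S := isClosed_Icc.inter (isClosed_singleton.preimage hgc)
  have hSbdd : BddBelow S := (bddBelow_Icc (b := a) (a := y)).mono inter_subset_left
  set z := sInf S with hz
  have hzS : z ∈ S := hScl.csInf_mem hSne hSbdd
  have hgz : g z = 0 := hzS.2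
  have hza : a ≤ z := hzS.1.1
  have hzy : z ≤ y := hzS.1.2
  have hzne : z ≠ a := fun h' => by rw [h'] at hgz; exact hga.ne' hgz
  have hza' : a < z := lt_of_le_of_ne hza (Ne.symm hzne)
  -- g > 0 on (x0, z)
  have hpos : ∀ x ∈ Ioo x0 z, 0 < g x := by
    intro x ⟨hx1, hx2⟩
    rcases le_or_gt x a with hxa | hxa
    · exact hsub ⟨hx1, lt_of_le_of_lt hxa hau⟩
    · rcases lt_trichotomy (g x) 0 with hgx | hgx | hgx
      · obtain ⟨c', hc', hc'0⟩ : ∃ c' ∈ Icc a x, g c' = 0 :=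
          intermediate_value_Icc' hxa.le hgc.continuousOn ⟨hgx.le, hga.le⟩
        have : z ≤ c' := csInf_le hSbdd ⟨⟨hc'.1, hc'.2.trans (hx2.le.trans hzy)⟩, hc'0⟩
        linarith [hc'.2]
      · have : z ≤ x := csInf_le hSbdd ⟨⟨hxa.le, hx2.le.trans hzy⟩, hgx⟩
        linarith
      · exact hgx
  -- but g < 0 just left of z
  obtain ⟨_, hl⟩ := ev_key g hf' hgz (hcrit z hgz)
  have hmem : Ioo x0 z ∈ 𝓝[<] z := Ioo_mem_nhdsLT_of_mem ⟨hx0a.trans hza', le_refl z⟩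
  obtain ⟨x, hx1, hx2⟩ := (hl.and (eventually_iff.mpr hmem)).exists
  exact absurd (hpos x hx2) (not_lt.mpr hx1.le)

lemma keyneg (f : ℝ → ℝ)
    (hf : Differentiable ℝ f) (hf' : Differentiable ℝ (deriv f))
    (hcrit : ∀ x : ℝ, deriv f x = 0 → 0 < deriv (deriv f) x)
    {x0 : ℝ} (h0 : deriv f x0 = 0) : ∀ x, x < x0 → deriv f x < 0 := by
  set F : ℝ → ℝ := fun x => f (-x) with hF
  have hdF : ∀ x, deriv F x = -deriv f (-x) := fun x => deriv_comp_neg f x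
  have hF' : Differentiable ℝ (deriv F) := by
    rw [funext hdF]
    exact ((hf'.comp (differentiable_neg)).neg)
  have hddF : ∀ x, deriv (deriv F) x = deriv (deriv f) (-x) := by
    intro x
    rw [funext hdF, deriv.fun_neg, deriv_comp_neg (deriv f) x, neg_neg]
  have hcritF : ∀ x, deriv F x = 0 → 0 < deriv (deriv F) x := by
    intro x hx
    rw [hdF, neg_eq_zero] at hx
    rw [hddF]; exact hcrit _ hx
  have h0F : deriv F (-x0) = 0 := by rw [hdF, neg_neg, h0, neg_zero]
  intro x hx
  have := key F hF' hcritF h0F (-x) (by linarith)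
  rw [hdF, neg_neg] at this
  linarith

theorem stmt4 (f : ℝ → ℝ)
    (hf : Differentiable ℝ f) (hf' : Differentiable ℝ (deriv f))
    (hcrit : ∀ x : ℝ, deriv f x = 0 → 0 < deriv (deriv f) x) :
    (∀ x y : ℝ, deriv f x = 0 → deriv f y = 0 → x = y) ∧
    (∀ x0 : ℝ, deriv f x0 = 0 → ∀ x : ℝ, x ≠ x0 → f x0 < f x) := by
  constructor
  · intro x y hx hy
    by_contra hne
    rcases lt_or_gt_of_ne hne with h | h
    · exact absurd hy (ne_of_gt (key f hf' hcrit hx y h))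
    · exact absurd hx (ne_of_gt (key f hf' hcrit hy x h))
  · intro x0 h0 x hx
    rcases lt_or_gt_of_ne hx with h | h
    · have hanti : StrictAntiOn f (Iic x0) := by
        apply strictAntiOn_of_deriv_neg (convex_Iic x0) hf.continuous.continuousOn
        intro t ht
        rw [interior_Iic] at ht
        exact keyneg f hf hf' hcrit h0 t ht
      exact hanti h.le self_mem_Iic h
    · have hmono : StrictMonoOn f (Ici x0) := by
        apply strictMonoOn_of_deriv_pos (convex_Ici x0) hf.continuous.continuousOn
        intro t ht
        rw [interior_Ici] at ht
        exact key f hf' hcrit h0 t ht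
      exact hmono self_mem_Ici h.le h
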